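/- Let P be a convex polytope with ℓ nonconstant on edges, satisfying the Irreducibility Assumption (F^-(v) and F^+(v) are faces of P for every vertex v). Then O^- is a stratification if and only if for every vertex v the face F^-(v) has no incoming directed edges (i.e., there is no edge u → u' with u' ∈ F^-(v) and u ∉ F^-(v)). -/

import Mathlib

open Set

variable {V : Type*} [NormedAddCommGroup V] [NormedSpace ℝ V]

/-- A (nonempty) convex polytope: the convex hull of a nonempty finite set of points. -/
def IsPolytope (P : Set V) : Prop :=
  ∃ s : Finset V, s.Nonempty ∧ P = convexHull ℝ (s : Set V)

/-- A (nonempty exposed) face of a polytope. -/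
def IsFace (P F : Set V) : Prop :=
  F.Nonempty ∧ IsExposed ℝ P F

/-- A vertex of a polytope: a point whose singleton is a face. -/
def IsVertex (P : Set V) (v : V) : Prop := IsFace P {v}

/-- An edge of a polytope: a face which is a nondegenerate segment. -/
def IsEdge (P : Set V) (v w : V) : Prop := v ≠ w ∧ IsFace P (segment ℝ v w)

/-- `ℓ` attains its maximum on `G` at `v`. -/
def MaxAt (ℓ : V →L[ℝ] ℝ) (G : Set V) (v : V) : Prop := v ∈ G ∧ ∀ x ∈ G, ℓ x ≤ ℓ v

/-- `ℓ` attains its minimum on `G` at `v`. -/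
def MinAt (ℓ : V →L[ℝ] ℝ) (G : Set V) (v : V) : Prop := v ∈ G ∧ ∀ x ∈ G, ℓ v ≤ ℓ x

/-- `ℓ` is nonconstant on every edge of `P`. -/
def NonconstOnEdges (P : Set V) (ℓ : V →L[ℝ] ℝ) : Prop :=
  ∀ v w, IsEdge P v w → ℓ v ≠ ℓ w

/-- Directed edge: an edge oriented by increasing `ℓ`. -/
def DirEdge (P : Set V) (ℓ : V →L[ℝ] ℝ) (v w : V) : Prop := IsEdge P v w ∧ ℓ v < ℓ w

/-- The witness relation `O(v,w)`: some face of `P` has ℓ-minimum at `v` and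
ℓ-maximum at `w`. -/
def ORel (P : Set V) (ℓ : V →L[ℝ] ℝ) (v w : V) : Prop :=
  ∃ G, IsFace P G ∧ MinAt ℓ G v ∧ MaxAt ℓ G w

/-- `O⁻(v)`: the union of relative interiors of faces of `P` on which `ℓ` attains
its maximum at `v`. -/
def Oneg (P : Set V) (ℓ : V →L[ℝ] ℝ) (v : V) : Set V :=
  ⋃ G ∈ {G : Set V | IsFace P G ∧ MaxAt ℓ G v}, intrinsicInterior ℝ G

/-- `O⁺(v)`: the union of relative interiors of faces of `P` on which `ℓ` attains
its minimum at `v`. -/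
def Opos (P : Set V) (ℓ : V →L[ℝ] ℝ) (v : V) : Set V :=
  ⋃ G ∈ {G : Set V | IsFace P G ∧ MinAt ℓ G v}, intrinsicInterior ℝ G

/-- `F⁻(v)`: the closure of `O⁻(v)`. -/
def Fneg (P : Set V) (ℓ : V →L[ℝ] ℝ) (v : V) : Set V := closure (Oneg P ℓ v)

/-- `F⁺(v)`: the closure of `O⁺(v)`. -/
def Fpos (P : Set V) (ℓ : V →L[ℝ] ℝ) (v : V) : Set V := closure (Opos P ℓ v)

/-- The partition `O⁻` is a stratification. -/
def StratNeg (P : Set V) (ℓ : V →L[ℝ] ℝ) : Prop :=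
  ∀ u w : V, IsVertex P u → IsVertex P w →
    (Oneg P ℓ u ∩ Fneg P ℓ w).Nonempty → Oneg P ℓ u ⊆ Fneg P ℓ w

/-- The dimension of a subset of `V` (dimension of its affine span). -/
noncomputable def dimS (F : Set V) : ℕ := Module.finrank ℝ (vectorSpan ℝ F)


set_option maxHeartbeats 1000000
section AuxStmt17

lemma hull_le {t : Set V} {f : V →L[ℝ] ℝ} {c : ℝ} (h : ∀ z ∈ t, f z ≤ c) :
    ∀ x ∈ convexHull ℝ t, f x ≤ c := by
  intro x hx
  have : convexHull ℝ t ⊆ {x | f x ≤ c} :=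
    convexHull_min h (convex_halfSpace_le f.toLinearMap.isLinear c)
  exact this hx

lemma hull_argmax_subset (t : Finset V) (f : V →L[ℝ] ℝ) (c : ℝ) (h : ∀ z ∈ t, f z ≤ c)
    {x : V} (hx : x ∈ convexHull ℝ (t : Set V)) (hfx : f x = c) :
    x ∈ convexHull ℝ ((t.filter fun z => f z = c : Finset V) : Set V) := by
  classical
  rw [Finset.convexHull_eq] at hx
  obtain ⟨w, hw0, hw1, hwx⟩ := hx
  have hz : ∀ z ∈ t, z ∉ t.filter (fun z => f z = c) → w z = 0 := by
    intro z hz hznot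
    rw [Finset.mem_filter] at hznot
    have hfz : f z < c := lt_of_le_of_ne (h z hz) (fun he => hznot ⟨hz, he⟩)
    by_contra hwz
    have hwzpos : 0 < w z := lt_of_le_of_ne (hw0 z hz) (Ne.symm hwz)
    have hxc : f x = ∑ y ∈ t, w y * f y := by
      rw [← hwx, Finset.centerMass_eq_of_sum_1 _ _ hw1, map_sum]
      simp [mul_comm]
    have hlt : ∑ y ∈ t, w y * f y < ∑ y ∈ t, w y * c := by
      apply Finset.sum_lt_sum
      · intro i hi; exact mul_le_mul_of_nonneg_left (h i hi) (hw0 i hi)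
      · exact ⟨z, hz, by nlinarith⟩
    rw [← Finset.sum_mul, hw1, one_mul] at hlt
    rw [hxc] at hfx; linarith
  have hsub : (t.filter fun z => f z = c) ⊆ t := Finset.filter_subset _ _
  have hcm : (t.filter fun z => f z = c).centerMass w id = x := by
    rw [Finset.centerMass_subset id hsub hz]; exact hwx
  rw [Finset.convexHull_eq]
  refine ⟨w, fun y hy => hw0 y (hsub hy), ?_, hcm⟩
  rw [Finset.sum_subset hsub hz]; exact hw1

lemma face_gen {s : Finset V} {F : Set V} (hF : IsFace (convexHull ℝ (s : Set V)) F) :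
    ∃ (l : V →L[ℝ] ℝ) (c : ℝ), (∀ z ∈ s, l z ≤ c) ∧
      (s.filter fun z => l z = c).Nonempty ∧
      F = convexHull ℝ ((s.filter fun z => l z = c : Finset V) : Set V) ∧
      F = {x ∈ convexHull ℝ (s : Set V) | l x = c} := by
  classical
  obtain ⟨hne, hexp⟩ := hF
  obtain ⟨l, hl⟩ := hexp hne
  obtain ⟨x₀, hx₀⟩ := hne
  have hx₀' := hx₀
  rw [hl] at hx₀'
  obtain ⟨hx₀Q, hx₀max⟩ := hx₀'
  have hbound : ∀ z ∈ s, l z ≤ l x₀ := fun z hz => hx₀max z (subset_convexHull ℝ _ hz)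
  have hset : F = {x ∈ convexHull ℝ (s : Set V) | l x = l x₀} := by
    rw [hl]; ext x
    constructor
    · rintro ⟨hxQ, hxmax⟩
      exact ⟨hxQ, le_antisymm (hx₀max x hxQ) (hxmax x₀ hx₀Q)⟩
    · rintro ⟨hxQ, hxeq⟩
      refine ⟨hxQ, fun y hy => ?_⟩
      rw [hxeq]; exact hx₀max y hy
  have hhull : F = convexHull ℝ ((s.filter fun z => l z = l x₀ : Finset V) : Set V) := by
    apply Subset.antisymm
    · intro x hx
      rw [hset] at hx
      exact hull_argmax_subset s l (l x₀) hbound hx.1 hx.2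
    · apply convexHull_min
      · intro z hz
        rw [Finset.coe_filter] at hz
        rw [hset]
        exact ⟨subset_convexHull ℝ _ hz.1, hz.2⟩
      · rw [hset]
        exact ((convex_convexHull ℝ _).inter (convex_hyperplane l.toLinearMap.isLinear (l x₀)))
  refine ⟨l, l x₀, hbound, ?_, hhull, hset⟩
  by_contra hemp
  rw [Finset.not_nonempty_iff_eq_empty] at hemp
  rw [hemp] at hhull
  simp only [Finset.coe_empty, convexHull_empty] at hhull
  exact absurd (hhull ▸ hx₀) (notMem_empty x₀)

lemma face_trans {s : Finset V} {F B : Set V}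
    (hF : IsFace (convexHull ℝ (s : Set V)) F) (hB : IsFace F B) :
    IsFace (convexHull ℝ (s : Set V)) B := by
  classical
  obtain ⟨l, c, hlc, htne, hFhull, hFset⟩ := face_gen hF
  set t := s.filter (fun z => l z = c) with ht
  have hBt : IsFace (convexHull ℝ (t : Set V)) B := by rw [← hFhull]; exact hB
  obtain ⟨f, d, hfd, hune, hBhull, hBset⟩ := face_gen hBt
  obtain ⟨M, hM⟩ := Finset.exists_le ((s.filter fun z => l z < c).image fun z => (f z - d) / (c - l z))
  set N : ℝ := max M 0 + 1 with hN
  have hN0 : (0:ℝ) ≤ max M 0 := le_max_right M 0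
  have hNpos : 0 < N := by rw [hN]; linarith
  have hNR : ∀ z ∈ s, l z < c → f z - d < N * (c - l z) := by
    intro z hz hlz
    have h1 : (f z - d) / (c - l z) ≤ M :=
      hM _ (Finset.mem_image_of_mem _ (Finset.mem_filter.2 ⟨hz, hlz⟩))
    have h2 : (f z - d) / (c - l z) < N := by
      rw [hN]; calc (f z - d) / (c - l z) ≤ max M 0 := h1.trans (le_max_left M 0)
      _ < max M 0 + 1 := by linarith
    have hpos : 0 < c - l z := by linarith
    calc f z - d = ((f z - d)/(c - l z)) * (c - l z) := by field_simp
    _ < N * (c - l z) := mul_lt_mul_of_pos_right h2 hpos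
  set ψ : V →L[ℝ] ℝ := N • l + f with hψ
  have hψapp : ∀ v : V, ψ v = N * l v + f v := fun v => by
    simp [hψ]
  have hψz : ∀ z ∈ (s : Set V), ψ z ≤ N * c + d := by
    intro z hz
    rw [Finset.mem_coe] at hz
    rcases lt_or_eq_of_le (hlc z hz) with h | h
    · have := hNR z hz h; rw [hψapp]; nlinarith
    · have hzt : z ∈ t := Finset.mem_filter.2 ⟨hz, h⟩
      have hfz : f z ≤ d := hfd z hzt
      rw [hψapp, h]; nlinarith
  obtain ⟨b, hb⟩ := hB.1
  have hbF : b ∈ F := hB.2.subset hb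
  have hbF' := hbF; rw [hFset] at hbF'
  have hbB' := hb; rw [hBset] at hbB'
  have hψb : ψ b = N * c + d := by rw [hψapp, hbF'.2, hbB'.2]
  refine ⟨hB.1, fun _ => ⟨ψ, ?_⟩⟩
  ext x
  constructor
  · intro hxB
    have hxF : x ∈ F := hB.2.subset hxB
    have hxF' := hxF; rw [hFset] at hxF'
    have hxB' := hxB; rw [hBset] at hxB'
    have hψx : ψ x = N*c+d := by rw [hψapp, hxF'.2, hxB'.2]
    exact ⟨hxF'.1, fun y hy => by rw [hψx]; exact hull_le hψz y hy⟩
  · rintro ⟨hxQ, hxmax⟩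
    have hbQ : b ∈ convexHull ℝ (s:Set V) := hbF'.1
    have hψx : ψ x = N*c+d := le_antisymm (hull_le hψz x hxQ) (hψb ▸ hxmax b hbQ)
    have hsub : x ∈ convexHull ℝ ((s.filter fun z => ψ z = N*c+d : Finset V) : Set V) :=
      hull_argmax_subset s ψ _ (fun z hz => hψz z hz) hxQ hψx
    have hss : ((s.filter fun z => ψ z = N*c+d : Finset V) : Set V) ⊆
        ((t.filter fun z => f z = d : Finset V) : Set V) := by
      intro z hz
      simp only [Finset.coe_filter, mem_setOf_eq] at hz ⊢
      obtain ⟨hzs, hzψ⟩ := hz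
      rw [hψapp] at hzψ
      have hzc : l z = c := by
        rcases lt_or_eq_of_le (hlc z hzs) with h | h
        · exfalso; have := hNR z hzs h; nlinarith
        · exact h
      have hzf : f z = d := by rw [hzc] at hzψ; linarith
      exact ⟨Finset.mem_filter.2 ⟨hzs, hzc⟩, hzf⟩
    have hfin := convexHull_mono hss hsub
    rw [← hBhull] at hfin; exact hfin

lemma exposed_point_mem {t : Finset V} {x : V}
    (hx : IsFace (convexHull ℝ (t : Set V)) {x}) : x ∈ t := by
  classical
  obtain ⟨l, c, hlc, hne, hhull, hset⟩ := face_gen hx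
  obtain ⟨z, hz⟩ := hne
  have hzmem : z ∈ convexHull ℝ ((t.filter fun z => l z = c : Finset V) : Set V) :=
    subset_convexHull ℝ _ (by exact_mod_cast hz)
  rw [← hhull] at hzmem
  have : z = x := hzmem
  subst this
  exact (Finset.mem_filter.1 hz).1

lemma singleton_face_of_strict {t : Finset V} {x : V} (hxt : x ∈ t) (f : V →L[ℝ] ℝ)
    (hf : ∀ z ∈ t, z ≠ x → f z < f x) : IsFace (convexHull ℝ (t : Set V)) {x} := by
  classical
  have hb : ∀ z ∈ (t : Set V), f z ≤ f x := by
    intro z hz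
    rcases eq_or_ne z x with rfl | h
    · exact le_rfl
    · exact (hf z (by exact_mod_cast hz) h).le
  refine ⟨singleton_nonempty x, fun _ => ⟨f, ?_⟩⟩
  ext q
  constructor
  · rintro rfl
    exact ⟨subset_convexHull ℝ _ hxt, fun y hy => hull_le hb y hy⟩
  · rintro ⟨hqQ, hqmax⟩
    have hqf : f q = f x := le_antisymm (hull_le hb q hqQ) (hqmax x (subset_convexHull ℝ _ hxt))
    have hmem := hull_argmax_subset t f (f x) hb hqQ hqf
    have hsub : ((t.filter fun z => f z = f x : Finset V) : Set V) ⊆ {x} := by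
      intro z hz
      simp only [Finset.coe_filter, mem_setOf_eq] at hz
      by_contra hne
      exact absurd hz.2 (ne_of_lt (hf z hz.1 hne))
    have := convexHull_mono hsub hmem
    rwa [convexHull_singleton] at this

lemma vert_gen : ∀ (n : ℕ) (t : Finset V), t.card ≤ n → ∃ t' : Finset V, t' ⊆ t ∧
    convexHull ℝ (t' : Set V) = convexHull ℝ (t : Set V) ∧
    ∀ x ∈ t', IsFace (convexHull ℝ (t : Set V)) {x} := by
  intro n
  induction n with
  | zero =>
    intro t ht
    have : t = ∅ := Finset.card_eq_zero.1 (Nat.le_zero.1 ht)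
    subst this
    exact ⟨∅, subset_rfl, rfl, fun x hx => absurd hx (Finset.notMem_empty x)⟩
  | succ n ih =>
    intro t ht
    classical
    by_cases hall : ∀ z ∈ t, IsFace (convexHull ℝ (t : Set V)) {z}
    · exact ⟨t, subset_rfl, rfl, hall⟩
    · push_neg at hall
      obtain ⟨z₀, hz₀t, hz₀⟩ := hall
      have hz₀mem : z₀ ∈ convexHull ℝ ((t.erase z₀ : Finset V) : Set V) := by
        by_contra hnot
        apply hz₀
        obtain ⟨φ, u, hφ1, hφ2⟩ := geometric_hahn_banach_closed_point
          (convex_convexHull ℝ _) (((t.erase z₀).finite_toSet.isCompact_convexHull (𝕜 := ℝ)).isClosed) hnot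
        apply singleton_face_of_strict hz₀t φ
        intro z hz hne
        have hzmem : z ∈ convexHull ℝ ((t.erase z₀ : Finset V) : Set V) :=
          subset_convexHull ℝ _ (by exact_mod_cast Finset.mem_erase.2 ⟨hne, hz⟩)
        calc φ z < u := hφ1 _ hzmem
        _ < φ z₀ := hφ2
      have hhull : convexHull ℝ ((t.erase z₀ : Finset V) : Set V) = convexHull ℝ (t : Set V) := by
        apply Subset.antisymm (convexHull_mono (by exact_mod_cast Finset.erase_subset _ _))
        apply convexHull_min _ (convex_convexHull ℝ _)
        intro z hz
        rcases eq_or_ne z z₀ with rfl | h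
        · exact hz₀mem
        · exact subset_convexHull ℝ _ (by exact_mod_cast Finset.mem_erase.2 ⟨h, by exact_mod_cast hz⟩)
      have hcard : (t.erase z₀).card ≤ n := by
        have h1 := Finset.card_erase_of_mem hz₀t
        have h2 := Finset.card_pos.2 ⟨z₀, hz₀t⟩
        omega
      obtain ⟨t', ht'sub, ht'hull, ht'face⟩ := ih (t.erase z₀) hcard
      refine ⟨t', ht'sub.trans (Finset.erase_subset _ _), by rw [ht'hull, hhull], ?_⟩
      intro x hx
      have := ht'face x hx
      rwa [hhull] at this

lemma edge_exists : ∀ (n : ℕ) (t : Finset V), t.card ≤ n → ∀ (x z₀ : V),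
    IsFace (convexHull ℝ (t : Set V)) {x} → z₀ ∈ t → z₀ ≠ x →
    ∃ y, IsEdge (convexHull ℝ (t : Set V)) x y := by
  intro n
  induction n with
  | zero =>
    intro t ht x z₀ _ hz₀ _
    have : t = ∅ := Finset.card_eq_zero.1 (Nat.le_zero.1 ht)
    subst this
    exact absurd hz₀ (Finset.notMem_empty z₀)
  | succ n ih =>
    intro t ht x z₀ hx hz₀t hz₀x
    classical
    have hxt : x ∈ t := exposed_point_mem hx
    have hxQ : x ∈ convexHull ℝ (t : Set V) := subset_convexHull ℝ _ hxt
    obtain ⟨h, hh⟩ := hx.2 hx.1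
    have hxprop : x ∈ {q ∈ convexHull ℝ (t : Set V) | ∀ y ∈ convexHull ℝ (t : Set V), h y ≤ h q} := by
      rw [← hh]; rfl
    have hxmax : ∀ y ∈ convexHull ℝ (t : Set V), h y ≤ h x := hxprop.2
    have huniq : ∀ q ∈ convexHull ℝ (t : Set V), h q = h x → q = x := by
      intro q hq hqx
      have : q ∈ {q ∈ convexHull ℝ (t : Set V) | ∀ y ∈ convexHull ℝ (t : Set V), h y ≤ h q} :=
        ⟨hq, fun y hy => hqx ▸ hxmax y hy⟩
      rw [← hh] at this
      exact this
    have tuniq : ∀ z ∈ t, h z = h x → z = x := fun z hz he =>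
      huniq z (subset_convexHull ℝ _ hz) he
    have hhb : ∀ z ∈ t, h z ≤ h x := fun z hz => hxmax z (subset_convexHull ℝ _ hz)
    by_cases hcaseB : ∀ φ : V →L[ℝ] ℝ, ∃ a b : ℝ, ∀ z ∈ t, φ z = a + b * h z
    · -- collinear case
      have hz₀lt : h z₀ < h x :=
        lt_of_le_of_ne (hhb z₀ hz₀t) (fun he => hz₀x (tuniq _ hz₀t he))
      set θ : V → ℝ := fun z => (h x - h z) / (h x - h z₀) with hθ
      have hden : 0 < h x - h z₀ := by linarith
      have hrep : ∀ z ∈ t, z = x + θ z • (z₀ - x) := by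
        intro z hz
        by_contra hne
        obtain ⟨φ, u, hφ1, hφ2⟩ := geometric_hahn_banach_point_closed
          (convex_singleton (x + θ z • (z₀ - x))) isClosed_singleton hne
        have hlt : φ z < φ (x + θ z • (z₀ - x)) :=
          lt_trans hφ1 (hφ2 _ rfl)
        obtain ⟨a, b, hab⟩ := hcaseB φ
        have e1 : φ z = a + b * h z := hab z hz
        have e2 : φ x = a + b * h x := hab x hxt
        have e3 : φ z₀ = a + b * h z₀ := hab z₀ hz₀t
        have e4 : φ (x + θ z • (z₀ - x)) = φ x + θ z * (φ z₀ - φ x) := by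
          simp only [map_add, map_smul, map_sub, smul_eq_mul] <;> ring
        have e5 : θ z * (h x - h z₀) = h x - h z := by
          rw [hθ]; field_simp
        rw [e4, e1, e2, e3] at hlt
        have e6 : θ z * (a + b * h z₀ - (a + b * h x)) = b * (h z - h x) := by
          linear_combination (-b) * e5
        linarith [hlt, e6]
      obtain ⟨zM, hzMt, hzMmax⟩ := t.exists_max_image θ ⟨z₀, hz₀t⟩
      have hθz₀ : θ z₀ = 1 := by rw [hθ]; field_simp
      have hθM : 1 ≤ θ zM := hθz₀ ▸ hzMmax z₀ hz₀t
      have hθMpos : 0 < θ zM := by linarith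
      have hzMx : zM ≠ x := by
        intro he
        have hzero : θ x = 0 := by rw [hθ]; simp
        rw [he, hzero] at hθM
        linarith
      have key : ∀ (q : V) (a aM : ℝ), aM ≠ 0 →
          (1 - a/aM) • x + (a/aM) • (x + aM • q) = x + a • q := by
        intro q a aM hne
        rw [smul_add, smul_smul, div_mul_cancel₀ _ hne]
        module
      have hseg : convexHull ℝ (t : Set V) = segment ℝ x zM := by
        apply Subset.antisymm
        · apply convexHull_min _ (convex_segment _ _)
          intro z hz
          have hz' : z ∈ t := by exact_mod_cast hz
          have hrepz := hrep z hz'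
          have hrepM := hrep zM hzMt
          have hθz0 : 0 ≤ θ z := div_nonneg (by linarith [hhb z hz']) hden.le
          have hratio1 : 0 ≤ θ z / θ zM := div_nonneg hθz0 hθMpos.le
          have hratio2 : θ z / θ zM ≤ 1 := (div_le_one hθMpos).2 (hzMmax z hz')
          refine ⟨1 - θ z / θ zM, θ z / θ zM, by linarith, hratio1, by ring, ?_⟩
          calc (1 - θ z / θ zM) • x + (θ z / θ zM) • zM
              = (1 - θ z / θ zM) • x + (θ z / θ zM) • (x + θ zM • (z₀ - x)) := by
                rw [← hrepM]
            _ = x + θ z • (z₀ - x) := key _ _ _ (ne_of_gt hθMpos)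
            _ = z := hrepz.symm
        · exact (convex_convexHull ℝ _).segment_subset hxQ (subset_convexHull ℝ _ hzMt)
      refine ⟨zM, Ne.symm hzMx, ?_⟩
      rw [← hseg]
      exact ⟨⟨x, hxQ⟩, IsExposed.refl _⟩
    · -- main case
      push_neg at hcaseB
      obtain ⟨φ₀, hφ₀⟩ := hcaseB
      have hSne : ∃ φ : V →L[ℝ] ℝ, (∀ a b : ℝ, ∃ z ∈ t, φ z ≠ a + b * h z) ∧
          ∃ z ∈ t, φ x < φ z := by
        by_cases hup : ∃ z ∈ t, φ₀ x < φ₀ z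
        · exact ⟨φ₀, hφ₀, hup⟩
        · push_neg at hup
          refine ⟨-φ₀, ?_, ?_⟩
          · intro a b
            obtain ⟨z, hz, hne⟩ := hφ₀ (-a) (-b)
            refine ⟨z, hz, ?_⟩
            simp only [ContinuousLinearMap.neg_apply]
            intro he
            apply hne
            linarith
          · by_contra hdown
            push_neg at hdown
            obtain ⟨z, hz, hne⟩ := hφ₀ (φ₀ x) 0
            apply hne
            have h1 := hup z hz
            have h2 := hdown z hz
            simp only [ContinuousLinearMap.neg_apply, neg_le_neg_iff] at h2
            have : φ₀ z = φ₀ x := le_antisymm h1 (by linarith)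
            rw [this]; ring
      obtain ⟨φ, hφA, z₁, hz₁t, hz₁⟩ := hSne
      set S := t.filter (fun z => φ x < φ z) with hS
      have hz₁S : z₁ ∈ S := Finset.mem_filter.2 ⟨hz₁t, hz₁⟩
      have hSh : ∀ z ∈ S, h z < h x := by
        intro z hz
        obtain ⟨hzt, hzφ⟩ := Finset.mem_filter.1 hz
        refine lt_of_le_of_ne (hhb z hzt) (fun he => ?_)
        rw [tuniq z hzt he] at hzφ
        exact lt_irrefl _ hzφ
      set sv : V → ℝ := fun z => (h x - h z) / (φ z - φ x) with hsv
      obtain ⟨zs, hzsS, hzsmin⟩ := S.exists_min_image sv ⟨z₁, hz₁S⟩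
      have hzsφ : φ x < φ zs := (Finset.mem_filter.1 hzsS).2
      have hzst : zs ∈ t := (Finset.mem_filter.1 hzsS).1
      set c := sv zs with hc
      have hcpos : 0 < c := by
        rw [hc, hsv]
        exact div_pos (by linarith [hSh zs hzsS]) (by linarith)
      set f : V →L[ℝ] ℝ := h + c • φ with hf
      have hfapp : ∀ v : V, f v = h v + c * φ v := fun v => by simp [hf]
      have hfb : ∀ z ∈ t, f z ≤ f x := by
        intro z hz
        by_cases hzS : φ x < φ z
        · have hmem : z ∈ S := Finset.mem_filter.2 ⟨hz, hzS⟩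
          have hcle : c ≤ sv z := hzsmin z hmem
          have hd : 0 < φ z - φ x := by linarith
          have : c * (φ z - φ x) ≤ h x - h z := by
            have := (le_div_iff₀ hd).1 (hc ▸ hcle)
            linarith [this]
          rw [hfapp, hfapp]; nlinarith
        · push_neg at hzS
          have := hhb z hz
          rw [hfapp, hfapp]; nlinarith
      have hfb' : ∀ z ∈ (t : Set V), f z ≤ f x := fun z hz => hfb z (by exact_mod_cast hz)
      have hfeq : ∀ z ∈ t, f z = f x → (z = x ∨ φ x < φ z) := by
        intro z hz he
        by_cases hzS : φ x < φ z
        · exact Or.inr hzS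
        · push_neg at hzS
          have h1 : h z ≤ h x := hhb z hz
          rw [hfapp, hfapp] at he
          have h2 : h z = h x := by nlinarith
          exact Or.inl (tuniq z hz h2)
      set tE := t.filter (fun z => f z = f x) with htE
      have hxtE : x ∈ tE := Finset.mem_filter.2 ⟨hxt, rfl⟩
      have hzsE : zs ∈ tE := by
        refine Finset.mem_filter.2 ⟨hzst, ?_⟩
        have hd : 0 < φ zs - φ x := by linarith
        have he : h x - h zs = c * (φ zs - φ x) := by
          rw [hc, hsv]; field_simp
        rw [hfapp, hfapp]; linarith
      have hzsx : zs ≠ x := fun he => by rw [he] at hzsφ; exact lt_irrefl _ hzsφ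
      have hcard : tE.card ≤ n := by
        have hne : ¬ ∀ z ∈ t, f z = f x := by
          intro hall
          obtain ⟨z, hzt, hne⟩ := hφA (f x / c) (-(1 / c))
          apply hne
          have := hall z hzt
          rw [hfapp] at this
          field_simp
          linarith
        push_neg at hne
        obtain ⟨zb, hzbt, hzbne⟩ := hne
        have hss : tE ⊂ t := by
          refine Finset.ssubset_iff_of_subset (Finset.filter_subset _ _) |>.2 ?_
          exact ⟨zb, hzbt, fun hmem => hzbne (Finset.mem_filter.1 hmem).2⟩
        have := Finset.card_lt_card hss
        omega
      have hEmemf : ∀ z ∈ (tE : Set V), f z = f x := by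
        intro z hz
        rw [Finset.mem_coe] at hz
        exact (Finset.mem_filter.1 hz).2
      have hEface : IsFace (convexHull ℝ (t : Set V)) (convexHull ℝ (tE : Set V)) := by
        refine ⟨⟨x, subset_convexHull ℝ _ hxtE⟩, fun _ => ⟨f, ?_⟩⟩
        ext q
        constructor
        · intro hq
          have hq1 : q ∈ convexHull ℝ (t : Set V) :=
            convexHull_mono (by exact_mod_cast Finset.filter_subset _ _) hq
          have hq2 : f q = f x := by
            have hle : f q ≤ f x := hull_le (fun z hz => (hEmemf z hz).le) q hq
            have hge : f x ≤ f q := by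
              have : ∀ z ∈ (tE : Set V), (-f) z ≤ (-f) x := by
                intro z hz
                simp only [ContinuousLinearMap.neg_apply]
                exact neg_le_neg (hEmemf z hz).ge
              have := hull_le this q hq
              simp only [ContinuousLinearMap.neg_apply] at this
              linarith
            linarith
          exact ⟨hq1, fun y hy => hq2 ▸ hull_le hfb' y hy⟩
        · rintro ⟨hqQ, hqmax⟩
          have hqf : f q = f x := le_antisymm (hull_le hfb' q hqQ) (hqmax x hxQ)
          exact hull_argmax_subset t f (f x) (fun z hz => hfb z (by exact_mod_cast hz)) hqQ hqf
      have hφE : ∀ z ∈ (tE : Set V), (-φ) z ≤ (-φ) x := by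
        intro z hz
        rw [Finset.mem_coe] at hz
        obtain ⟨hzt, hzf⟩ := Finset.mem_filter.1 hz
        rcases hfeq z hzt hzf with rfl | hlt
        · exact le_rfl
        · simp only [ContinuousLinearMap.neg_apply]; linarith
      have hxE : IsFace (convexHull ℝ (tE : Set V)) {x} := by
        refine ⟨singleton_nonempty x, fun _ => ⟨-φ, ?_⟩⟩
        ext q
        constructor
        · rintro rfl
          exact ⟨subset_convexHull ℝ _ hxtE, fun y hy => hull_le hφE y hy⟩
        · rintro ⟨hqE, hqmax⟩
          have hqφ : (-φ) q = (-φ) x :=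
            le_antisymm (hull_le hφE q hqE) (hqmax x (subset_convexHull ℝ _ hxtE))
          have hmem := hull_argmax_subset tE (-φ) ((-φ) x)
            (fun z hz => hφE z (by exact_mod_cast hz)) hqE hqφ
          have hsub : ((tE.filter fun z => (-φ) z = (-φ) x : Finset V) : Set V) ⊆ {x} := by
            intro z hz
            simp only [Finset.coe_filter, mem_setOf_eq] at hz
            obtain ⟨hztE, hzφ⟩ := hz
            obtain ⟨hzt, hzf⟩ := Finset.mem_filter.1 hztE
            rcases hfeq z hzt hzf with rfl | hlt
            · rfl
            · exfalso
              simp only [ContinuousLinearMap.neg_apply, neg_inj] at hzφ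
              rw [hzφ] at hlt
              exact lt_irrefl _ hlt
          have := convexHull_mono hsub hmem
          rwa [convexHull_singleton] at this
      obtain ⟨y, hy1, hy2⟩ := ih tE hcard x zs hxE hzsE hzsx
      exact ⟨y, hy1, face_trans hEface hy2⟩

lemma iel : ∀ (n : ℕ) (t : Finset V), t.card ≤ n → ∀ (ℓ : V →L[ℝ] ℝ) (x w : V),
    IsFace (convexHull ℝ (t : Set V)) {x} → w ∈ convexHull ℝ (t : Set V) → ℓ x < ℓ w →
    ∃ y, IsEdge (convexHull ℝ (t : Set V)) x y ∧ ℓ x < ℓ y := by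
  intro n
  induction n with
  | zero =>
    intro t ht ℓ x w _ hw _
    have : t = ∅ := Finset.card_eq_zero.1 (Nat.le_zero.1 ht)
    subst this
    simp only [Finset.coe_empty, convexHull_empty] at hw
    exact absurd hw (notMem_empty w)
  | succ n ih =>
    intro t ht ℓ x w hx hw hxw
    classical
    have hxt : x ∈ t := exposed_point_mem hx
    have hxQ : x ∈ convexHull ℝ (t : Set V) := subset_convexHull ℝ _ hxt
    obtain ⟨h, hh⟩ := hx.2 hx.1
    have hxprop : x ∈ {q ∈ convexHull ℝ (t : Set V) | ∀ y ∈ convexHull ℝ (t : Set V), h y ≤ h q} := by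
      rw [← hh]; rfl
    have hxmax : ∀ y ∈ convexHull ℝ (t : Set V), h y ≤ h x := hxprop.2
    have huniq : ∀ q ∈ convexHull ℝ (t : Set V), h q = h x → q = x := by
      intro q hq hqx
      have : q ∈ {q ∈ convexHull ℝ (t : Set V) | ∀ y ∈ convexHull ℝ (t : Set V), h y ≤ h q} :=
        ⟨hq, fun y hy => hqx ▸ hxmax y hy⟩
      rw [← hh] at this
      exact this
    have tuniq : ∀ z ∈ t, h z = h x → z = x := fun z hz he =>
      huniq z (subset_convexHull ℝ _ hz) he
    have hhb : ∀ z ∈ t, h z ≤ h x := fun z hz => hxmax z (subset_convexHull ℝ _ hz)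
    -- S nonempty
    have hz₁ : ∃ z ∈ t, ℓ x < ℓ z := by
      by_contra hnot
      push_neg at hnot
      have : ℓ w ≤ ℓ x := hull_le (fun z hz => hnot z (by exact_mod_cast hz)) w hw
      linarith
    obtain ⟨z₁, hz₁t, hz₁lt⟩ := hz₁
    set S := t.filter (fun z => ℓ x < ℓ z) with hS
    have hz₁S : z₁ ∈ S := Finset.mem_filter.2 ⟨hz₁t, hz₁lt⟩
    have hSh : ∀ z ∈ S, h z < h x := by
      intro z hz
      obtain ⟨hzt, hzφ⟩ := Finset.mem_filter.1 hz
      refine lt_of_le_of_ne (hhb z hzt) (fun he => ?_)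
      rw [tuniq z hzt he] at hzφ
      exact lt_irrefl _ hzφ
    set sv : V → ℝ := fun z => (h x - h z) / (ℓ z - ℓ x) with hsv
    obtain ⟨zs, hzsS, hzsmin⟩ := S.exists_min_image sv ⟨z₁, hz₁S⟩
    have hzsφ : ℓ x < ℓ zs := (Finset.mem_filter.1 hzsS).2
    have hzst : zs ∈ t := (Finset.mem_filter.1 hzsS).1
    set c := sv zs with hc
    have hcpos : 0 < c := by
      rw [hc, hsv]
      exact div_pos (by linarith [hSh zs hzsS]) (by linarith)
    set f : V →L[ℝ] ℝ := h + c • ℓ with hf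
    have hfapp : ∀ v : V, f v = h v + c * ℓ v := fun v => by simp [hf]
    have hfb : ∀ z ∈ t, f z ≤ f x := by
      intro z hz
      by_cases hzS : ℓ x < ℓ z
      · have hmem : z ∈ S := Finset.mem_filter.2 ⟨hz, hzS⟩
        have hcle : c ≤ sv z := hzsmin z hmem
        have hd : 0 < ℓ z - ℓ x := by linarith
        have : c * (ℓ z - ℓ x) ≤ h x - h z := by
          have := (le_div_iff₀ hd).1 (hc ▸ hcle)
          linarith [this]
        rw [hfapp, hfapp]; nlinarith
      · push_neg at hzS
        have := hhb z hz
        rw [hfapp, hfapp]; nlinarith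
    have hfb' : ∀ z ∈ (t : Set V), f z ≤ f x := fun z hz => hfb z (by exact_mod_cast hz)
    have hfeq : ∀ z ∈ t, f z = f x → (z = x ∨ ℓ x < ℓ z) := by
      intro z hz he
      by_cases hzS : ℓ x < ℓ z
      · exact Or.inr hzS
      · push_neg at hzS
        have h1 : h z ≤ h x := hhb z hz
        rw [hfapp, hfapp] at he
        have h2 : h z = h x := by nlinarith
        exact Or.inl (tuniq z hz h2)
    set tE := t.filter (fun z => f z = f x) with htE
    have hxtE : x ∈ tE := Finset.mem_filter.2 ⟨hxt, rfl⟩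
    have hzsE : zs ∈ tE := by
      refine Finset.mem_filter.2 ⟨hzst, ?_⟩
      have hd : 0 < ℓ zs - ℓ x := by linarith
      have he : h x - h zs = c * (ℓ zs - ℓ x) := by
        rw [hc, hsv]; field_simp
      rw [hfapp, hfapp]; linarith
    have hzsx : zs ≠ x := fun he => by rw [he] at hzsφ; exact lt_irrefl _ hzsφ
    by_cases hall : ∀ z ∈ t, f z = f x
    · -- every generator is x or ℓ-above x; any edge will do
      obtain ⟨y, hyne, hyface⟩ := edge_exists (n+1) t ht x zs hx hzst hzsx
      refine ⟨y, ⟨hyne, hyface⟩, ?_⟩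
      have hyQ : y ∈ convexHull ℝ (t : Set V) :=
        hyface.2.subset (right_mem_segment ℝ x y)
      have hlb : ∀ z ∈ (t : Set V), (-ℓ) z ≤ (-ℓ) x := by
        intro z hz
        rw [Finset.mem_coe] at hz
        rcases hfeq z hz (hall z hz) with rfl | hlt
        · exact le_rfl
        · simp only [ContinuousLinearMap.neg_apply]; linarith
      have hyge : ℓ x ≤ ℓ y := by
        have := hull_le hlb y hyQ
        simp only [ContinuousLinearMap.neg_apply] at this
        linarith
      rcases lt_or_eq_of_le hyge with hlt | heq
      · exact hlt
      · exfalso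
        have hmem := hull_argmax_subset t (-ℓ) ((-ℓ) x)
          (fun z hz => hlb z (by exact_mod_cast hz)) hyQ (by simp [← heq])
        have hsub : ((t.filter fun z => (-ℓ) z = (-ℓ) x : Finset V) : Set V) ⊆ {x} := by
          intro z hz
          simp only [Finset.coe_filter, mem_setOf_eq] at hz
          obtain ⟨hzt, hzφ⟩ := hz
          rcases hfeq z hzt (hall z hzt) with rfl | hlt
          · rfl
          · exfalso
            simp only [ContinuousLinearMap.neg_apply, neg_inj] at hzφ
            rw [hzφ] at hlt
            exact lt_irrefl _ hlt
        have := convexHull_mono hsub hmem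
        rw [convexHull_singleton] at this
        exact hyne.symm this
    · push_neg at hall
      obtain ⟨zb, hzbt, hzbne⟩ := hall
      have hcard : tE.card ≤ n := by
        have hss : tE ⊂ t := by
          refine Finset.ssubset_iff_of_subset (Finset.filter_subset _ _) |>.2 ?_
          exact ⟨zb, hzbt, fun hmem => hzbne (Finset.mem_filter.1 hmem).2⟩
        have := Finset.card_lt_card hss
        omega
      have hEmemf : ∀ z ∈ (tE : Set V), f z = f x := by
        intro z hz
        rw [Finset.mem_coe] at hz
        exact (Finset.mem_filter.1 hz).2
      have hEface : IsFace (convexHull ℝ (t : Set V)) (convexHull ℝ (tE : Set V)) := by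
        refine ⟨⟨x, subset_convexHull ℝ _ hxtE⟩, fun _ => ⟨f, ?_⟩⟩
        ext q
        constructor
        · intro hq
          have hq1 : q ∈ convexHull ℝ (t : Set V) :=
            convexHull_mono (by exact_mod_cast Finset.filter_subset _ _) hq
          have hq2 : f q = f x := by
            have hle : f q ≤ f x := hull_le (fun z hz => (hEmemf z hz).le) q hq
            have hge : f x ≤ f q := by
              have hb : ∀ z ∈ (tE : Set V), (-f) z ≤ (-f) x := by
                intro z hz
                simp only [ContinuousLinearMap.neg_apply]
                exact neg_le_neg (hEmemf z hz).ge
              have := hull_le hb q hq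
              simp only [ContinuousLinearMap.neg_apply] at this
              linarith
            linarith
          exact ⟨hq1, fun y hy => hq2 ▸ hull_le hfb' y hy⟩
        · rintro ⟨hqQ, hqmax⟩
          have hqf : f q = f x := le_antisymm (hull_le hfb' q hqQ) (hqmax x hxQ)
          exact hull_argmax_subset t f (f x) (fun z hz => hfb z (by exact_mod_cast hz)) hqQ hqf
      have hφE : ∀ z ∈ (tE : Set V), (-ℓ) z ≤ (-ℓ) x := by
        intro z hz
        rw [Finset.mem_coe] at hz
        obtain ⟨hzt, hzf⟩ := Finset.mem_filter.1 hz
        rcases hfeq z hzt hzf with rfl | hlt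
        · exact le_rfl
        · simp only [ContinuousLinearMap.neg_apply]; linarith
      have hxE : IsFace (convexHull ℝ (tE : Set V)) {x} := by
        refine ⟨singleton_nonempty x, fun _ => ⟨-ℓ, ?_⟩⟩
        ext q
        constructor
        · rintro rfl
          exact ⟨subset_convexHull ℝ _ hxtE, fun y hy => hull_le hφE y hy⟩
        · rintro ⟨hqE, hqmax⟩
          have hqφ : (-ℓ) q = (-ℓ) x :=
            le_antisymm (hull_le hφE q hqE) (hqmax x (subset_convexHull ℝ _ hxtE))
          have hmem := hull_argmax_subset tE (-ℓ) ((-ℓ) x)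
            (fun z hz => hφE z (by exact_mod_cast hz)) hqE hqφ
          have hsub : ((tE.filter fun z => (-ℓ) z = (-ℓ) x : Finset V) : Set V) ⊆ {x} := by
            intro z hz
            simp only [Finset.coe_filter, mem_setOf_eq] at hz
            obtain ⟨hztE, hzφ⟩ := hz
            obtain ⟨hzt, hzf⟩ := Finset.mem_filter.1 hztE
            rcases hfeq z hzt hzf with rfl | hlt
            · rfl
            · exfalso
              simp only [ContinuousLinearMap.neg_apply, neg_inj] at hzφ
              rw [hzφ] at hlt
              exact lt_irrefl _ hlt
          have := convexHull_mono hsub hmem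
          rwa [convexHull_singleton] at this
      obtain ⟨y, hy1, hy2⟩ := ih tE hcard ℓ x zs hxE (subset_convexHull ℝ _ hzsE) hzsφ
      exact ⟨y, ⟨hy1.1, face_trans hEface hy1.2⟩, hy2⟩

lemma relint_face_subset {Q F G : Set V} (hF : IsFace Q F) (hG : G ⊆ Q)
    {p : V} (hpi : p ∈ intrinsicInterior ℝ G) (hpF : p ∈ F) : G ⊆ F := by
  obtain ⟨hFne, hFexp⟩ := hF
  obtain ⟨l, hl⟩ := hFexp hFne
  have hpF' := hpF
  rw [hl] at hpF'
  obtain ⟨hpQ, hpmax⟩ := hpF'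
  intro q hq
  have hpG : p ∈ G := intrinsicInterior_subset hpi
  rw [mem_intrinsicInterior] at hpi
  obtain ⟨phat, hphatint, hphatcoe⟩ := hpi
  have hqspan : q ∈ affineSpan ℝ G := subset_affineSpan ℝ G hq
  have hpspan : p ∈ affineSpan ℝ G := subset_affineSpan ℝ G hpG
  have hmem : ∀ θ : ℝ, AffineMap.lineMap q p θ ∈ affineSpan ℝ G := fun θ =>
    AffineMap.lineMap_mem θ hqspan hpspan
  set γ : ℝ → affineSpan ℝ G := fun θ => ⟨AffineMap.lineMap q p θ, hmem θ⟩ with hγ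
  have hcont : Continuous γ :=
    Continuous.subtype_mk AffineMap.lineMap_continuous _
  have hγ1 : γ 1 = phat := by
    apply Subtype.ext
    simp only [hγ, AffineMap.lineMap_apply_one]
    exact hphatcoe.symm
  have hopen : IsOpen (γ ⁻¹' (interior ((↑) ⁻¹' G : Set (affineSpan ℝ G)))) :=
    isOpen_interior.preimage hcont
  have h1mem : (1 : ℝ) ∈ γ ⁻¹' (interior ((↑) ⁻¹' G : Set (affineSpan ℝ G))) := by
    rw [mem_preimage, hγ1]; exact hphatint
  obtain ⟨ε, hε, hball⟩ := Metric.isOpen_iff.1 hopen 1 h1mem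
  set θ₀ : ℝ := 1 + ε / 2 with hθ₀def
  have hθ₀gt : 1 < θ₀ := by rw [hθ₀def]; linarith
  have hθ₀pos : 0 < θ₀ := by linarith
  have hθ₀ball : θ₀ ∈ Metric.ball (1 : ℝ) ε := by
    rw [Metric.mem_ball, Real.dist_eq, hθ₀def]
    rw [abs_of_pos (by linarith)]
    linarith
  have hγθ₀ : AffineMap.lineMap q p θ₀ ∈ G := by
    have := interior_subset (hball hθ₀ball)
    exact this
  set r := AffineMap.lineMap q p θ₀ with hrdef
  have hcomb : p = (1 - 1 / θ₀) • q + (1 / θ₀) • r := by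
    rw [hrdef, AffineMap.lineMap_apply_module]
    match_scalars <;> field_simp <;> ring
  have hrQ : r ∈ Q := hG hγθ₀
  have hqQ : q ∈ Q := hG hq
  have hlq : l q ≤ l p := hpmax q hqQ
  have hlr : l r ≤ l p := hpmax r hrQ
  have hlp : l p = (1 - 1 / θ₀) * l q + (1 / θ₀) * l r := by
    conv_lhs => rw [hcomb]
    simp [map_add, map_smul]
  have h1θa : 0 < 1 / θ₀ := by positivity
  have h1θb : 1 / θ₀ < 1 := by rw [div_lt_one hθ₀pos]; exact hθ₀gt
  have hlqe : l q = l p := by nlinarith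
  rw [hl]
  exact ⟨hqQ, fun y hy => hlqe ▸ hpmax y hy⟩

lemma openSegment_subset_intrinsicInterior {u u' : V} (hne : u ≠ u') :
    openSegment ℝ u u' ⊆ intrinsicInterior ℝ (segment ℝ u u') := by
  rintro p ⟨a, b, ha, hb, hab, rfl⟩
  have hpseg : a • u + b • u' ∈ segment ℝ u u' := ⟨a, b, ha.le, hb.le, hab, rfl⟩
  set p := a • u + b • u' with hpdef
  have hspan : affineSpan ℝ (segment ℝ u u') = affineSpan ℝ ({u, u'} : Set V) := by
    apply le_antisymm
    · rw [affineSpan_le]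
      intro z hz
      rw [← convexHull_pair] at hz
      exact convexHull_subset_affineSpan _ hz
    · rw [affineSpan_le]
      rintro z (rfl | rfl)
      · exact subset_affineSpan ℝ _ (left_mem_segment ℝ z u')
      · exact subset_affineSpan ℝ _ (right_mem_segment ℝ u z)
  have hnorm : 0 < ‖u' - u‖ := norm_pos_iff.2 (sub_ne_zero.2 (Ne.symm hne))
  set rr := min a b * ‖u' - u‖ with hrrdef
  have hrr : 0 < rr := mul_pos (lt_min ha hb) hnorm
  rw [mem_intrinsicInterior]
  refine ⟨⟨p, subset_affineSpan ℝ _ hpseg⟩, ?_, rfl⟩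
  rw [mem_interior]
  refine ⟨Subtype.val ⁻¹' Metric.ball p rr, ?_, ?_, ?_⟩
  · rintro ⟨z, hzspan⟩ hzball
    simp only [mem_preimage, Metric.mem_ball] at hzball
    show z ∈ segment ℝ u u'
    rw [hspan] at hzspan
    have hdir : z -ᵥ u ∈ (affineSpan ℝ ({u, u'} : Set V)).direction :=
      (AffineSubspace.vsub_right_mem_direction_iff_mem (left_mem_affineSpan_pair ℝ u u') z).2 hzspan
    rw [direction_affineSpan, mem_vectorSpan_pair_rev] at hdir
    obtain ⟨θ, hθ⟩ := hdir
    have hzrep : z = u + θ • (u' - u) := by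
      have h2 : θ • (u' - u) = z - u := hθ
      rw [h2]; abel
    have hprep : p = u + b • (u' - u) := by
      rw [hpdef]
      have : a = 1 - b := by linarith
      rw [this]; module
    have hzp : z - p = (θ - b) • (u' - u) := by
      rw [hzrep, hprep, sub_smul]; abel
    have hdist : ‖z - p‖ = |θ - b| * ‖u' - u‖ := by
      rw [hzp, norm_smul, Real.norm_eq_abs]
    have hball' : |θ - b| * ‖u' - u‖ < min a b * ‖u' - u‖ := by
      rw [← hdist, ← hrrdef]
      rw [dist_eq_norm] at hzball
      exact hzball
    have habs : |θ - b| < min a b := lt_of_mul_lt_mul_right hball' hnorm.le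
    have habs' := abs_lt.1 habs
    have hθpos : 0 < θ := by
      have := min_le_right a b
      linarith [habs'.1]
    have hθlt : θ < 1 := by
      have := min_le_left a b
      linarith [habs'.2]
    refine ⟨1 - θ, θ, by linarith, hθpos.le, by ring, ?_⟩
    rw [hzrep]; module
  · exact Metric.isOpen_ball.preimage continuous_subtype_val
  · simp only [mem_preimage, Metric.mem_ball, dist_self]
    exact hrr

lemma segment_face_argmax {ℓ : V →L[ℝ] ℝ} {a b : V} (hlt : ℓ a < ℓ b) :
    IsFace (segment ℝ a b) {b} := by
  classical
  have hcoe : (({a, b} : Finset V) : Set V) = ({a, b} : Set V) := by simp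
  have hseg : segment ℝ a b = convexHull ℝ (({a, b} : Finset V) : Set V) := by
    rw [hcoe, convexHull_pair]
  rw [hseg]
  apply singleton_face_of_strict (by simp) ℓ
  intro z hz hzb
  rcases Finset.mem_insert.1 hz with rfl | hz'
  · exact hlt
  · rw [Finset.mem_singleton] at hz'
    exact absurd hz' hzb

lemma filter_face (t : Finset V) (f : V →L[ℝ] ℝ) (c : ℝ) (hb : ∀ z ∈ t, f z ≤ c)
    (hne : (t.filter fun z => f z = c).Nonempty) :
    IsFace (convexHull ℝ (t : Set V))
      (convexHull ℝ ((t.filter fun z => f z = c : Finset V) : Set V)) := by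
  classical
  obtain ⟨z₀, hz₀⟩ := hne
  have hz₀t : z₀ ∈ t := (Finset.mem_filter.1 hz₀).1
  have hz₀f : f z₀ = c := (Finset.mem_filter.1 hz₀).2
  have hb' : ∀ z ∈ (t : Set V), f z ≤ c := fun z hz => hb z (by exact_mod_cast hz)
  have hmemf : ∀ z ∈ ((t.filter fun z => f z = c : Finset V) : Set V), f z = c := by
    intro z hz
    rw [Finset.mem_coe] at hz
    exact (Finset.mem_filter.1 hz).2
  refine ⟨⟨z₀, subset_convexHull ℝ _ (by exact_mod_cast hz₀)⟩, fun _ => ⟨f, ?_⟩⟩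
  ext q
  constructor
  · intro hq
    have hq1 : q ∈ convexHull ℝ (t : Set V) :=
      convexHull_mono (by exact_mod_cast Finset.filter_subset _ _) hq
    have hq2 : f q = c := by
      have hle : f q ≤ c := hull_le (fun z hz => (hmemf z hz).le) q hq
      have hge : c ≤ f q := by
        have hbneg : ∀ z ∈ ((t.filter fun z => f z = c : Finset V) : Set V),
            (-f) z ≤ (-f) z₀ := by
          intro z hz
          simp only [ContinuousLinearMap.neg_apply, hz₀f]
          exact neg_le_neg (hmemf z hz).ge
        have := hull_le hbneg q hq
        simp only [ContinuousLinearMap.neg_apply, hz₀f] at this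
        linarith
      linarith
    refine ⟨hq1, fun y hy => ?_⟩
    rw [hq2]
    exact hull_le hb' y hy
  · rintro ⟨hqQ, hqmax⟩
    have hqf : f q = c := by
      have h1 : f q ≤ c := hull_le hb' q hqQ
      have h2 : c ≤ f q := by
        have := hqmax z₀ (subset_convexHull ℝ _ hz₀t)
        rw [hz₀f] at this
        exact this
      linarith
    exact hull_argmax_subset t f c hb hqQ hqf

lemma hull_const {t : Finset V} {f : V →L[ℝ] ℝ} {c : ℝ} (h : ∀ z ∈ t, f z = c) :
    ∀ q ∈ convexHull ℝ (t : Set V), f q = c := by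
  intro q hq
  have h1 : f q ≤ c := hull_le (fun z hz => (h z (by exact_mod_cast hz)).le) q hq
  have h2 : (-f) q ≤ -c := by
    refine hull_le (fun z hz => ?_) q hq
    simp only [ContinuousLinearMap.neg_apply]
    exact neg_le_neg (h z (by exact_mod_cast hz)).ge
  simp only [ContinuousLinearMap.neg_apply] at h2
  linarith

lemma max_strict {s : Finset V} {G : Set V} {ℓ : V →L[ℝ] ℝ} {u x : V}
    (hℓ : NonconstOnEdges (convexHull ℝ (s : Set V)) ℓ)
    (hG : IsFace (convexHull ℝ (s : Set V)) G) (hmax : MaxAt ℓ G u) (hx : x ∈ G)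
    (hne : x ≠ u) : ℓ x < ℓ u := by
  classical
  rcases lt_or_eq_of_le (hmax.2 x hx) with hlt | he
  · exact hlt
  exfalso
  obtain ⟨l, c, hlc, htne, hGhull, hGset⟩ := face_gen hG
  set t := s.filter (fun z => l z = c) with htdef
  have hbound : ∀ z ∈ t, ℓ z ≤ ℓ u := fun z hz =>
    hmax.2 z (hGhull ▸ subset_convexHull ℝ _ hz)
  set t₁ := t.filter (fun z => ℓ z = ℓ u) with ht₁def
  have hxc : x ∈ convexHull ℝ (t₁ : Set V) := by
    apply hull_argmax_subset t ℓ (ℓ u) hbound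
    · rw [← hGhull]; exact hx
    · exact he
  have huc : u ∈ convexHull ℝ (t₁ : Set V) := by
    apply hull_argmax_subset t ℓ (ℓ u) hbound
    · rw [← hGhull]; exact hmax.1
    · rfl
  have ht₁ne : t₁.Nonempty := by
    by_contra hc
    rw [Finset.not_nonempty_iff_eq_empty] at hc
    rw [hc] at huc
    simp only [Finset.coe_empty, convexHull_empty] at huc
    exact absurd huc (notMem_empty u)
  have hG₁face : IsFace (convexHull ℝ (t : Set V)) (convexHull ℝ (t₁ : Set V)) :=
    filter_face t ℓ (ℓ u) hbound ht₁ne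
  obtain ⟨t₁', hsub', hhull', hface'⟩ := vert_gen t₁.card t₁ le_rfl
  have hpair : ∃ x₁ ∈ t₁', ∃ z₂ ∈ t₁', z₂ ≠ x₁ := by
    by_contra hc
    push_neg at hc
    rcases Finset.eq_empty_or_nonempty t₁' with rfl | ⟨w₀, hw₀⟩
    · rw [Finset.coe_empty, convexHull_empty] at hhull'
      rw [← hhull'] at huc
      exact absurd huc (notMem_empty u)
    · have hsubs : (t₁' : Set V) ⊆ {w₀} := by
        intro z hz
        rw [Finset.mem_coe] at hz
        exact hc w₀ hw₀ z hz
      have hsing : convexHull ℝ (t₁' : Set V) ⊆ {w₀} := by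
        have h9 : convexHull ℝ (t₁' : Set V) ⊆ convexHull ℝ ({w₀} : Set V) :=
          convexHull_mono hsubs
        rwa [convexHull_singleton] at h9
      rw [hhull'] at hsing
      have hxw : x = w₀ := hsing hxc
      have huw : u = w₀ := hsing huc
      exact hne (hxw.trans huw.symm)
  obtain ⟨x₁, hx₁, z₂, hz₂, hz₂ne⟩ := hpair
  obtain ⟨y₁, hy₁⟩ := edge_exists t₁.card t₁ le_rfl x₁ z₂ (hface' x₁ hx₁)
    (hsub' hz₂) hz₂ne
  have hsegface : IsFace (convexHull ℝ (t : Set V)) (segment ℝ x₁ y₁) :=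
    face_trans hG₁face hy₁.2
  have hGt : IsFace (convexHull ℝ (s : Set V)) (convexHull ℝ (t : Set V)) := by
    rw [← hGhull]; exact hG
  have hedgeP : IsEdge (convexHull ℝ (s : Set V)) x₁ y₁ :=
    ⟨hy₁.1, face_trans hGt hsegface⟩
  have hconst : ∀ q ∈ convexHull ℝ (t₁ : Set V), ℓ q = ℓ u :=
    hull_const (fun z hz => (Finset.mem_filter.1 hz).2)
  have hx₁mem : x₁ ∈ convexHull ℝ (t₁ : Set V) := subset_convexHull ℝ _ (hsub' hx₁)
  have hy₁mem : y₁ ∈ convexHull ℝ (t₁ : Set V) := hy₁.2.2.subset (right_mem_segment ℝ x₁ y₁)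
  exact hℓ x₁ y₁ hedgeP ((hconst x₁ hx₁mem).trans (hconst y₁ hy₁mem).symm)

lemma claimB {s : Finset V} {F G : Set V} {ℓ : V →L[ℝ] ℝ} {u : V}
    (hℓ : NonconstOnEdges (convexHull ℝ (s : Set V)) ℓ)
    (hF : IsFace (convexHull ℝ (s : Set V)) F)
    (hnoinc : ¬ ∃ a b : V, DirEdge (convexHull ℝ (s : Set V)) ℓ a b ∧ b ∈ F ∧ a ∉ F)
    (hG : IsFace (convexHull ℝ (s : Set V)) G) (hmax : MaxAt ℓ G u) (huF : u ∈ F) :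
    G ⊆ F := by
  classical
  obtain ⟨l, c, hlc, htne, hGhull, hGset⟩ := face_gen hG
  set t := s.filter (fun z => l z = c) with htdef
  have hGt : IsFace (convexHull ℝ (s : Set V)) (convexHull ℝ (t : Set V)) := by
    rw [← hGhull]; exact hG
  set W : Set V := {z | z ∈ t ∧ IsFace (convexHull ℝ (t : Set V)) {z} ∧ z ∉ F} with hWdef
  have hWfin : W.Finite := t.finite_toSet.subset (fun z hz => hz.1)
  by_cases hWne : W.Nonempty
  · exfalso
    obtain ⟨x, hxW, hxmax⟩ := Set.exists_max_image W ℓ hWfin hWne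
    obtain ⟨hxt, hxface, hxF⟩ := hxW
    have hxG : x ∈ G := hGhull ▸ subset_convexHull ℝ _ hxt
    have hxu : x ≠ u := fun he => hxF (he ▸ huF)
    have hxlt : ℓ x < ℓ u := max_strict hℓ hG hmax hxG hxu
    have humem : u ∈ convexHull ℝ (t : Set V) := by rw [← hGhull]; exact hmax.1
    obtain ⟨y, hyedge, hylt⟩ := iel t.card t le_rfl ℓ x u hxface humem hxlt
    have hyface : IsFace (convexHull ℝ (t : Set V)) {y} :=
      face_trans hyedge.2 (segment_face_argmax hylt)
    have hyt : y ∈ t := exposed_point_mem hyface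
    have hyF : y ∈ F := by
      by_contra hyF
      have hyW : y ∈ W := ⟨hyt, hyface, hyF⟩
      exact absurd hylt (not_lt.2 (hxmax y hyW))
    have hedgeP : IsEdge (convexHull ℝ (s : Set V)) x y :=
      ⟨hyedge.1, face_trans hGt hyedge.2⟩
    exact hnoinc ⟨x, y, ⟨hedgeP, hylt⟩, hyF, hxF⟩
  · obtain ⟨t', hsub', hhull', hface'⟩ := vert_gen t.card t le_rfl
    have ht'F : (t' : Set V) ⊆ F := by
      intro z hz
      rw [Finset.mem_coe] at hz
      by_contra hzF
      exact hWne ⟨z, hsub' hz, hface' z hz, hzF⟩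
    have hGeq : G = convexHull ℝ (t' : Set V) := by rw [hhull', ← hGhull]
    rw [hGeq]
    exact convexHull_min ht'F (hF.2.convex (convex_convexHull ℝ _))

end AuxStmt17

/-- Under the Irreducibility Assumption (each `F⁻(v)` and `F⁺(v)` is
a face of `P`), `O⁻` is a stratification iff for every vertex `v` the face `F⁻(v)`
has no incoming directed edges. -/
theorem stmt17 (P : Set V) (hP : IsPolytope P) (ℓ : V →L[ℝ] ℝ)
    (hℓ : NonconstOnEdges P ℓ)
    (hirr : ∀ v, IsVertex P v → IsFace P (Fneg P ℓ v) ∧ IsFace P (Fpos P ℓ v)) :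
    StratNeg P ℓ ↔
      ∀ v, IsVertex P v →
        ¬ ∃ u u' : V, DirEdge P ℓ u u' ∧ u' ∈ Fneg P ℓ v ∧ u ∉ Fneg P ℓ v := by
  obtain ⟨s, hsne, hPs⟩ := hP
  subst hPs
  constructor
  · intro hstrat v hv
    rintro ⟨u, u', ⟨hedge, hlt⟩, hu'F, hunF⟩
    have hu'vert : IsVertex (convexHull ℝ (s : Set V)) u' :=
      face_trans hedge.2 (segment_face_argmax hlt)
    have hsegmax : MaxAt ℓ (segment ℝ u u') u' := by
      refine ⟨right_mem_segment ℝ u u', ?_⟩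
      intro q hq
      rw [← convexHull_pair] at hq
      refine hull_le ?_ q hq
      rintro z (rfl | rfl)
      · exact hlt.le
      · exact le_rfl
    have hu'O : u' ∈ Oneg (convexHull ℝ (s : Set V)) ℓ u' := by
      refine mem_biUnion (show ({u'} : Set V) ∈
        {G : Set V | IsFace (convexHull ℝ (s : Set V)) G ∧ MaxAt ℓ G u'} from
        ⟨hu'vert, ⟨rfl, by rintro x rfl; exact le_rfl⟩⟩) ?_
      rw [intrinsicInterior_singleton]
      rfl
    have hOsub : Oneg (convexHull ℝ (s : Set V)) ℓ u' ⊆ Fneg (convexHull ℝ (s : Set V)) ℓ v :=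
      hstrat u' v hu'vert hv ⟨u', hu'O, hu'F⟩
    have hsegsub : openSegment ℝ u u' ⊆ Fneg (convexHull ℝ (s : Set V)) ℓ v := by
      intro q hq
      apply hOsub
      exact mem_biUnion (show segment ℝ u u' ∈
        {G : Set V | IsFace (convexHull ℝ (s : Set V)) G ∧ MaxAt ℓ G u'} from
        ⟨hedge.2, hsegmax⟩) (openSegment_subset_intrinsicInterior hedge.1 hq)
    have hu : u ∈ Fneg (convexHull ℝ (s : Set V)) ℓ v := by
      have h1 : u ∈ closure (openSegment ℝ u u') :=
        segment_subset_closure_openSegment (left_mem_segment ℝ u u')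
      have h2 : closure (openSegment ℝ u u') ⊆
          closure (Fneg (convexHull ℝ (s : Set V)) ℓ v) := closure_mono hsegsub
      have h3 : closure (Fneg (convexHull ℝ (s : Set V)) ℓ v) =
          Fneg (convexHull ℝ (s : Set V)) ℓ v := by
        rw [Fneg, closure_closure]
      exact h3 ▸ h2 h1
    exact hunF hu
  · rintro hnoinc u w hu hw ⟨p, hpO, hpF⟩
    have hFface : IsFace (convexHull ℝ (s : Set V)) (Fneg (convexHull ℝ (s : Set V)) ℓ w) :=
      (hirr w hw).1
    obtain ⟨G₀, hG₀, hpint⟩ := mem_iUnion₂.1 hpO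
    have hG₀sub : G₀ ⊆ Fneg (convexHull ℝ (s : Set V)) ℓ w :=
      relint_face_subset hFface hG₀.1.2.subset hpint hpF
    have huF : u ∈ Fneg (convexHull ℝ (s : Set V)) ℓ w := hG₀sub hG₀.2.1
    intro x hx
    obtain ⟨G, hG, hxint⟩ := mem_iUnion₂.1 hx
    have hsub : G ⊆ Fneg (convexHull ℝ (s : Set V)) ℓ w :=
      claimB hℓ hFface (hnoinc w hw) hG.1 hG.2 huF
    exact hsub (intrinsicInterior_subset hxint)
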